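/- Let d ≥ 1 and n ≥ 2 be integers and let A be an invertible d × d matrix with rational entries whose order in GL_d(ℚ) is exactly n. Then the number of distinct complex eigenvalues of A (i.e. distinct roots in ℂ of the characteristic polynomial of A) that are different from 1 is at least f(n) := (Σ_{p prime, p ∣ n} φ(p^{v_p(n)})) − ε(n). -/

import Mathlib

/-- `ε(n) = 1` if `v₂(n) = 1` and `n ≠ 2`, and `ε(n) = 0` otherwise. -/
def epsAux (n : ℕ) : ℕ := if n.factorization 2 = 1 ∧ n ≠ 2 then 1 else 0

/-- `f(n) = (Σ_{p prime, p ∣ n} φ(p^{v_p(n)})) − ε(n)`. -/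
def fAux (n : ℕ) : ℕ := (∑ p ∈ n.primeFactors, (p ^ n.factorization p).totient) - epsAux n

open Polynomial Matrix

open Polynomial Matrix

theorem spec_iff_root {d : ℕ} (B : Matrix (Fin d) (Fin d) ℂ) (μ : ℂ) :
    μ ∈ spectrum ℂ B ↔ B.charpoly.IsRoot μ := by
  rw [spectrum.mem_iff, Matrix.isUnit_iff_isUnit_det, isUnit_iff_ne_zero, not_ne_iff]
  unfold Matrix.charpoly
  rw [IsRoot, eval_det, matPolyEquiv_charmatrix]
  have : (algebraMap ℂ (Matrix (Fin d) (Fin d) ℂ)) μ - B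
      = Polynomial.eval (scalar (Fin d) μ) (X - C B) := by
    simp [Algebra.algebraMap_eq_smul_one, smul_eq_diagonal_mul]
  rw [this]

theorem pow_eq_one_of_spectrum {d m p : ℕ} (hd : 1 ≤ d) (hp : p.Prime)
    (B : Matrix (Fin d) (Fin d) ℂ) (hB : B ^ (m * p) = 1)
    (hs : ∀ μ ∈ spectrum ℂ B, μ ^ m = 1) : B ^ m = 1 := by
  rcases Nat.eq_zero_or_pos m with rfl | hm
  · simp
  have : Nonempty (Fin d) := ⟨⟨0, hd⟩⟩
  have hnon : (spectrum ℂ B).Nonempty :=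
    spectrum.nonempty_of_isAlgClosed_of_finiteDimensional ℂ B
  set D : Matrix (Fin d) (Fin d) ℂ := B ^ m with hD
  have hspecD : spectrum ℂ D ⊆ {1} := by
    have : D = aeval B (X ^ m : ℂ[X]) := by simp [hD]
    rw [this, spectrum.map_polynomial_aeval_of_nonempty B _ hnon]
    rintro μ ⟨ν, hν, rfl⟩
    simp [hs ν hν]
  -- charpoly D = (X - 1)^d
  have hmonic := (Matrix.charpoly_monic D)
  have hdeg : D.charpoly.natDegree = d := by
    rw [Matrix.charpoly_natDegree_eq_dim, Fintype.card_fin]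
  have hroots : D.charpoly.roots = Multiset.replicate d 1 := by
    apply Multiset.eq_replicate.mpr
    constructor
    · rw [splits_iff_card_roots.mp (IsAlgClosed.splits _), hdeg]
    · intro b hb
      have : b ∈ spectrum ℂ D := (spec_iff_root D b).mpr (isRoot_of_mem_roots hb)
      exact hspecD this
  have hcp : D.charpoly = (X - 1 : ℂ[X]) ^ d := by
    have := (IsAlgClosed.splits _).eq_prod_roots_of_monic hmonic
    rw [hroots] at this
    simpa [Multiset.map_replicate, Multiset.prod_replicate] using this
  -- minpoly divides (X-1)^d and X^p - 1
  have h1 : minpoly ℂ D ∣ (X - 1 : ℂ[X]) ^ d := by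
    apply minpoly.dvd
    rw [← hcp]
    exact Matrix.aeval_self_charpoly D
  have h2 : minpoly ℂ D ∣ (X ^ p - 1 : ℂ[X]) := by
    apply minpoly.dvd
    simp only [map_sub, map_pow, aeval_X, _root_.map_one]
    rw [hD, ← pow_mul, hB]
    simp
  have hsf : Squarefree (X ^ p - 1 : ℂ[X]) := by
    have : ((X ^ p - C 1 : ℂ[X])).Separable :=
      separable_X_pow_sub_C 1 (by exact_mod_cast hp.ne_zero) one_ne_zero
    simpa using this.squarefree
  have hprime : Prime (X - 1 : ℂ[X]) := by simpa using prime_X_sub_C (1 : ℂ)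
  obtain ⟨i, hi, hassoc⟩ := (dvd_prime_pow hprime d).mp h1
  have hile : i ≤ 1 := by
    by_contra hgt
    push_neg at hgt
    have hdd : (X - 1 : ℂ[X]) * (X - 1) ∣ (X ^ p - 1 : ℂ[X]) := by
      calc (X - 1 : ℂ[X]) * (X - 1) = (X - 1 : ℂ[X]) ^ 2 := by ring
      _ ∣ (X - 1 : ℂ[X]) ^ i := pow_dvd_pow _ hgt
      _ ∣ minpoly ℂ D := hassoc.symm.dvd
      _ ∣ _ := h2
    exact hprime.not_unit (hsf _ hdd)
  have hdvdX1 : minpoly ℂ D ∣ (X - 1 : ℂ[X]) := by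
    calc minpoly ℂ D ∣ (X - 1 : ℂ[X]) ^ i := hassoc.dvd
    _ ∣ (X - 1 : ℂ[X]) ^ 1 := pow_dvd_pow _ hile
    _ = X - 1 := pow_one _
  obtain ⟨c, hc⟩ := hdvdX1
  have : aeval D (X - 1 : ℂ[X]) = 0 := by
    rw [hc, _root_.map_mul, minpoly.aeval, zero_mul]
  have h3 : D - 1 = 0 := by simpa using this
  rw [hD] at h3
  exact sub_eq_zero.mp h3


open Polynomial Matrix

-- number theory helper: divisor with full p-part
theorem full_p_part {n m p : ℕ} (hp : p.Prime) (hn : n ≠ 0) (hmn : m ∣ n) (hm : m ≠ 0)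
    (hnd : ¬ m ∣ n / p) (hpd : p ∣ n) : p ^ (n.factorization p) ∣ m := by
  rw [hp.pow_dvd_iff_le_factorization hm]
  by_contra hlt
  push_neg at hlt
  apply hnd
  have hnp : n / p ≠ 0 := by
    have := Nat.div_pos (Nat.le_of_dvd (Nat.pos_of_ne_zero hn) hpd) hp.pos
    omega
  rw [← Nat.factorization_le_iff_dvd hm hnp, Nat.factorization_div hpd]
  intro q
  rcases eq_or_ne q p with rfl | hq
  · simp only [Finsupp.tsub_apply, Nat.Prime.factorization_self hp]
    omega
  · simp only [Finsupp.tsub_apply, Nat.factorization_eq_zero_of_not_prime,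
      hp.factorization]
    rw [Finsupp.single_apply, if_neg (fun h => hq h.symm)]
    have := (Nat.factorization_le_iff_dvd hm hn).mpr hmn q
    omega



/-- product of prime powers over a finset of distinct primes divides anything they all divide -/
theorem prodPrimePow_dvd {F : Finset ℕ} (hF : ∀ p ∈ F, p.Prime) (e : ℕ → ℕ) {m : ℕ}
    (hd : ∀ p ∈ F, p ^ e p ∣ m) : (∏ p ∈ F, p ^ e p) ∣ m := by
  classical
  induction F using Finset.induction_on with
  | empty => simpa using one_dvd m
  | @insert a S ha ih =>
    rw [Finset.prod_insert ha]
    have hpa := hF a (Finset.mem_insert_self a S)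
    have hco : Nat.Coprime (a ^ e a) (∏ p ∈ S, p ^ e p) := by
      apply Nat.Coprime.pow_left
      rw [Nat.coprime_prod_right_iff]
      intro q hq
      exact Nat.Coprime.pow_right _
        ((Nat.coprime_primes hpa (hF q (Finset.mem_insert_of_mem hq))).mpr
          (fun h => ha (h ▸ hq)))
    exact hco.mul_dvd_of_dvd_of_dvd (hd a (Finset.mem_insert_self a S))
      (ih (fun p hp => hF p (Finset.mem_insert_of_mem hp))
        (fun p hp => hd p (Finset.mem_insert_of_mem hp)))

theorem totient_prodPrimePow {F : Finset ℕ} (hF : ∀ p ∈ F, p.Prime) (e : ℕ → ℕ) :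
    (∏ p ∈ F, p ^ e p).totient = ∏ p ∈ F, (p ^ e p).totient := by
  classical
  induction F using Finset.induction_on with
  | empty => simp
  | @insert a S ha ih =>
    rw [Finset.prod_insert ha, Finset.prod_insert ha]
    have hpa := hF a (Finset.mem_insert_self a S)
    have hco : Nat.Coprime (a ^ e a) (∏ p ∈ S, p ^ e p) := by
      apply Nat.Coprime.pow_left
      rw [Nat.coprime_prod_right_iff]
      intro q hq
      exact Nat.Coprime.pow_right _
        ((Nat.coprime_primes hpa (hF q (Finset.mem_insert_of_mem hq))).mpr
          (fun h => ha (h ▸ hq)))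
    rw [Nat.totient_mul hco, ih (fun p hp => hF p (Finset.mem_insert_of_mem hp))]

/-- sum ≤ product for factors all ≥ 2 -/
theorem sum_le_prod_of_two_le (F : Finset ℕ) (x : ℕ → ℕ) (hx : ∀ i ∈ F, 2 ≤ x i) :
    ∑ i ∈ F, x i ≤ ∏ i ∈ F, x i := by
  classical
  induction F using Finset.induction_on with
  | empty => simp
  | @insert a S ha ih =>
    rw [Finset.sum_insert ha, Finset.prod_insert ha]
    rcases S.eq_empty_or_nonempty with rfl | hS
    · simp
    · have h2a := hx a (Finset.mem_insert_self a S)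
      have h2P : 2 ≤ ∏ i ∈ S, x i := by
        obtain ⟨b, hb⟩ := hS
        calc 2 ≤ x b := hx b (Finset.mem_insert_of_mem hb)
        _ ≤ ∏ i ∈ S, x i := Finset.single_le_prod'
            (fun i hi => by have := hx i (Finset.mem_insert_of_mem hi); omega) hb
      have hih := ih (fun i hi => hx i (Finset.mem_insert_of_mem hi))
      calc x a + ∑ i ∈ S, x i ≤ x a + ∏ i ∈ S, x i := by omega
      _ ≤ x a * ∏ i ∈ S, x i := add_le_mul h2a h2P

theorem sum_le_prod_add_one (F : Finset ℕ) (x : ℕ → ℕ) (e : ℕ)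
    (hx1 : ∀ i ∈ F, 1 ≤ x i) (hx2 : ∀ i ∈ F, i ≠ e → 2 ≤ x i) :
    ∑ i ∈ F, x i ≤ (∏ i ∈ F, x i) + 1 := by
  classical
  by_cases he : e ∈ F
  · rcases Nat.lt_or_ge (x e) 2 with hxe | hxe
    · have hxe1 : x e = 1 := by have := hx1 e he; omega
      rw [← Finset.add_sum_erase _ _ he, ← Finset.mul_prod_erase _ _ he, hxe1, one_mul]
      have := sum_le_prod_of_two_le (F.erase e) x
        (fun i hi => hx2 i (Finset.mem_of_mem_erase hi) (Finset.ne_of_mem_erase hi))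
      omega
    · have := sum_le_prod_of_two_le F x (fun i hi => by
        rcases eq_or_ne i e with rfl | hne
        · exact hxe
        · exact hx2 i hi hne)
      omega
  · have := sum_le_prod_of_two_le F x (fun i hi => hx2 i hi (fun h => he (h ▸ hi)))
    omega

theorem arith_main (n : ℕ) (hn : 2 ≤ n) (g : ℕ → ℕ)
    (hg : ∀ p ∈ n.primeFactors, g p ∣ n ∧ p ^ (n.factorization p) ∣ g p) :
    fAux n ≤ ∑ m ∈ n.primeFactors.image g, m.totient := by
  classical
  have hn0 : n ≠ 0 := by omega
  set x : ℕ → ℕ := fun p => (p ^ n.factorization p).totient with hxdef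
  -- each g p is positive
  have hgpos : ∀ p ∈ n.primeFactors, 0 < g p := by
    intro p hp
    rcases Nat.eq_zero_or_pos (g p) with h0 | h
    · exfalso; apply hn0; simpa [h0] using (hg p hp).1
    · exact h
  rcases eq_or_ne n 2 with rfl | hn2
  · -- n = 2 directly
    have hP : Nat.primeFactors 2 = {2} := Nat.Prime.primeFactors Nat.prime_two
    rw [fAux, epsAux, hP]
    rw [if_neg (fun h => h.2 rfl)]
    rw [Finset.image_singleton, Finset.sum_singleton, Finset.sum_singleton]
    have h1 : (2 ^ Nat.factorization 2 2).totient = 1 := by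
      rw [Nat.Prime.factorization_self Nat.prime_two]
      simp [Nat.totient_two]
    rw [h1]
    have := hgpos 2 (by rw [hP]; exact Finset.mem_singleton_self 2)
    have := Nat.totient_pos.mpr this
    omega
  -- general nontrivial facts about x
  have hx1 : ∀ p ∈ n.primeFactors, 1 ≤ x p := by
    intro p hp
    have hpp := Nat.prime_of_mem_primeFactors hp
    exact Nat.totient_pos.mpr (Nat.pow_pos hpp.pos)
  have hfact_pos : ∀ p ∈ n.primeFactors, 0 < n.factorization p := fun p hp =>
    Nat.Prime.factorization_pos_of_dvd (Nat.prime_of_mem_primeFactors hp) hn0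
      (Nat.dvd_of_mem_primeFactors hp)
  have hx2 : ∀ p ∈ n.primeFactors, p ≠ 2 → 2 ≤ x p := by
    intro p hp hne
    have hpp := Nat.prime_of_mem_primeFactors hp
    have h3 : 3 ≤ p := by have := hpp.two_le; omega
    rw [hxdef]
    simp only
    rw [Nat.totient_prime_pow hpp (hfact_pos p hp)]
    have : 2 ≤ p - 1 := by omega
    have : 1 ≤ p ^ (n.factorization p - 1) := Nat.one_le_pow _ _ hpp.pos
    nlinarith
  -- per-fiber product bound
  have hfiber : ∀ m ∈ n.primeFactors.image g,
      (∏ p ∈ n.primeFactors.filter (fun p => g p = m), x p) ≤ m.totient := by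
    intro m hm
    obtain ⟨p0, hp0, rfl⟩ := Finset.mem_image.mp hm
    set F := n.primeFactors.filter (fun p => g p = g p0) with hF
    have hFsub : F ⊆ n.primeFactors := Finset.filter_subset _ _
    have hFprime : ∀ p ∈ F, p.Prime := fun p hp =>
      Nat.prime_of_mem_primeFactors (hFsub hp)
    have hdvd : ∀ p ∈ F, p ^ n.factorization p ∣ g p0 := by
      intro p hp
      have := (hg p (hFsub hp)).2
      rw [hF] at hp
      have heq : g p = g p0 := (Finset.mem_filter.mp hp).2
      rwa [heq] at this
    have hprod_dvd : (∏ p ∈ F, p ^ n.factorization p) ∣ g p0 :=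
      prodPrimePow_dvd hFprime _ hdvd
    calc (∏ p ∈ F, x p) = (∏ p ∈ F, p ^ n.factorization p).totient :=
          (totient_prodPrimePow hFprime _).symm
      _ ≤ (g p0).totient := Nat.le_of_dvd (Nat.totient_pos.mpr (hgpos p0 hp0))
          (Nat.totient_dvd_of_dvd hprod_dvd)
  -- reduce to a sum bound with epsilon on the right
  rw [fAux]
  have hsplit : ∑ p ∈ n.primeFactors, x p =
      ∑ m ∈ n.primeFactors.image g,
        ∑ p ∈ n.primeFactors.filter (fun p => g p = m), x p :=
    (Finset.sum_fiberwise_of_maps_to (fun p hp => Finset.mem_image_of_mem g hp) x).symm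
  rw [hsplit]
  rw [Nat.sub_le_iff_le_add]
  by_cases heps : n.factorization 2 = 1 ∧ n ≠ 2
  · -- epsilon = 1
    have heps1 : epsAux n = 1 := by rw [epsAux, if_pos heps]
    rw [heps1]
    have h2P : 2 ∈ n.primeFactors := by
      rw [Nat.mem_primeFactors]
      refine ⟨Nat.prime_two, ?_, hn0⟩
      have : n.factorization 2 ≠ 0 := by omega
      exact Nat.dvd_of_factorization_pos this
    have hbound : ∀ m ∈ n.primeFactors.image g,
        ∑ p ∈ n.primeFactors.filter (fun p => g p = m), x p ≤
          m.totient + (if m = g 2 then 1 else 0) := by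
      intro m hm
      rcases eq_or_ne m (g 2) with rfl | hne
      · rw [if_pos rfl]
        have := sum_le_prod_add_one (n.primeFactors.filter (fun p => g p = g 2)) x 2
          (fun i hi => hx1 i (Finset.mem_of_mem_filter i hi))
          (fun i hi hne => hx2 i (Finset.mem_of_mem_filter i hi) hne)
        have h2 := hfiber (g 2) hm
        omega
      · rw [if_neg hne]
        have := sum_le_prod_of_two_le (n.primeFactors.filter (fun p => g p = m)) x
          (fun i hi => by
            apply hx2 i (Finset.mem_of_mem_filter i hi)
            intro h2i
            apply hne
            rw [← (Finset.mem_filter.mp hi).2, h2i])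
        have h2 := hfiber m hm
        omega
    calc ∑ m ∈ n.primeFactors.image g, ∑ p ∈ n.primeFactors.filter (fun p => g p = m), x p
        ≤ ∑ m ∈ n.primeFactors.image g, (m.totient + (if m = g 2 then 1 else 0)) :=
          Finset.sum_le_sum hbound
      _ = (∑ m ∈ n.primeFactors.image g, m.totient) +
            ∑ m ∈ n.primeFactors.image g, (if m = g 2 then 1 else 0) := Finset.sum_add_distrib
      _ ≤ (∑ m ∈ n.primeFactors.image g, m.totient) + 1 := by
          have : (∑ m ∈ n.primeFactors.image g, (if m = g 2 then 1 else 0)) ≤ 1 := by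
            rw [Finset.sum_ite_eq' (n.primeFactors.image g) (g 2) (fun _ => 1)]
            split <;> omega
          omega
  · -- epsilon = 0
    have heps0 : epsAux n = 0 := by rw [epsAux, if_neg heps]
    rw [heps0]
    push_neg at heps
    have hf2 : n.factorization 2 ≠ 1 := by
      intro h
      exact hn2 (heps h)
    have hx2' : ∀ p ∈ n.primeFactors, 2 ≤ x p := by
      intro p hp
      rcases eq_or_ne p 2 with rfl | hne
      · have h2 := hfact_pos 2 hp
        have hge2 : 2 ≤ n.factorization 2 := by omega
        rw [hxdef]
        simp only
        rw [Nat.totient_prime_pow Nat.prime_two h2]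
        have : 2 ^ 1 ≤ 2 ^ (n.factorization 2 - 1) :=
          Nat.pow_le_pow_right (by omega) (by omega)
        simpa using this
      · exact hx2 p hp hne
    have hbound : ∀ m ∈ n.primeFactors.image g,
        ∑ p ∈ n.primeFactors.filter (fun p => g p = m), x p ≤ m.totient := by
      intro m hm
      have := sum_le_prod_of_two_le (n.primeFactors.filter (fun p => g p = m)) x
        (fun i hi => hx2' i (Finset.mem_of_mem_filter i hi))
      have h2 := hfiber m hm
      omega
    calc ∑ m ∈ n.primeFactors.image g, ∑ p ∈ n.primeFactors.filter (fun p => g p = m), x p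
        ≤ ∑ m ∈ n.primeFactors.image g, m.totient := Finset.sum_le_sum hbound
      _ ≤ (∑ m ∈ n.primeFactors.image g, m.totient) + 0 := by omega

/-- If `A ∈ GL_d(ℚ)` has order exactly `n ≥ 2`, then the number of distinct complex
eigenvalues of `A` (distinct roots in `ℂ` of its characteristic polynomial) different
from `1` is at least `f(n)`. -/
theorem card_eigenvalues_ne_one_ge (d n : ℕ) (hd : 1 ≤ d) (hn : 2 ≤ n)
    (A : GL (Fin d) ℚ) (hA : orderOf A = n) :
    fAux n ≤
      ((((A : Matrix (Fin d) (Fin d) ℚ).map ((↑) : ℚ → ℂ)).charpoly.roots.toFinset).erase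
        1).card := by
  classical
  have hne : Nonempty (Fin d) := ⟨⟨0, hd⟩⟩
  set M : Matrix (Fin d) (Fin d) ℚ := (A : Matrix (Fin d) (Fin d) ℚ) with hM
  set B : Matrix (Fin d) (Fin d) ℂ := M.map ((↑) : ℚ → ℂ) with hB
  set C : GL (Fin d) ℂ := Matrix.GeneralLinearGroup.map (n := Fin d) (Rat.castHom ℂ) A with hC
  have hCcoe : (C : Matrix (Fin d) (Fin d) ℂ) = B := by rw [hC, hB, hM]; rfl
  have hord : orderOf C = n := by
    rw [hC, ← hA]
    exact orderOf_injective _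
      (Units.map_injective (Matrix.map_injective Rat.cast_injective)) A
  have hn0 : n ≠ 0 := by omega
  have hBn : B ^ n = 1 := by
    have h1 : C ^ n = 1 := by rw [← hord]; exact pow_orderOf_eq_one C
    have := congrArg (Units.val) h1
    simpa [hCcoe] using this
  -- charpoly of B is the map of charpoly of M
  have hcpmap : B.charpoly = M.charpoly.map (Rat.castHom ℂ) := by
    rw [hB]
    exact Matrix.charpoly_map M (Rat.castHom ℂ)
  -- every spectrum element is an nth root of unity
  have hspec_pow : ∀ μ ∈ spectrum ℂ B, μ ^ n = 1 := by
    intro μ hμ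
    have h1 : (fun x => eval x ((X : ℂ[X]) ^ n)) '' spectrum ℂ B ⊆ spectrum ℂ (aeval B ((X:ℂ[X]) ^ n)) :=
      spectrum.subset_polynomial_aeval B _
    have h2 : μ ^ n ∈ spectrum ℂ (aeval B ((X:ℂ[X]) ^ n)) := by
      apply h1
      exact ⟨μ, hμ, by simp⟩
    rw [map_pow, aeval_X, hBn] at h2
    rwa [spectrum.one_eq, Set.mem_singleton_iff] at h2
  -- choose, for each prime p ∣ n, a spectrum element whose (n/p)-th power is not 1
  have hex : ∀ p : ℕ, ∃ l : ℂ, p ∈ n.primeFactors → l ∈ spectrum ℂ B ∧ l ^ (n / p) ≠ 1 := by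
    intro p
    by_cases hp : p ∈ n.primeFactors
    · rw [Nat.mem_primeFactors] at hp
      obtain ⟨hpp, hpd, -⟩ := hp
      by_contra hcon
      push_neg at hcon
      have hall : ∀ μ ∈ spectrum ℂ B, μ ^ (n / p) = 1 := fun μ hμ => (hcon μ).2 hμ
      have hBm : B ^ (n / p) = 1 := by
        apply pow_eq_one_of_spectrum hd hpp B _ hall
        rw [Nat.div_mul_cancel hpd]
        exact hBn
      have hCm : C ^ (n / p) = 1 := by
        apply Units.ext
        push_cast
        rw [hCcoe]
        exact hBm
      have := orderOf_dvd_of_pow_eq_one hCm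
      rw [hord] at this
      have hlt : n / p < n := Nat.div_lt_self (by omega) hpp.one_lt
      have hpos : 0 < n / p := Nat.div_pos (Nat.le_of_dvd (by omega) hpd) hpp.pos
      have := Nat.le_of_dvd hpos this
      omega
    · exact ⟨0, fun h => absurd h hp⟩
  choose lam hlam using hex
  set g : ℕ → ℕ := fun p => orderOf (lam p) with hg
  -- properties of g
  have hgood : ∀ p ∈ n.primeFactors, g p ∣ n ∧ p ^ (n.factorization p) ∣ g p := by
    intro p hp
    obtain ⟨hsp, hpow⟩ := hlam p hp
    rw [Nat.mem_primeFactors] at hp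
    obtain ⟨hpp, hpd, -⟩ := hp
    have hdvd : g p ∣ n := orderOf_dvd_of_pow_eq_one (hspec_pow _ hsp)
    have hfin : IsOfFinOrder (lam p) := isOfFinOrder_iff_pow_eq_one.mpr ⟨n, by omega, hspec_pow _ hsp⟩
    have hg0 : g p ≠ 0 := hfin.orderOf_pos.ne'
    have hnd : ¬ g p ∣ n / p := by
      intro hdd
      exact hpow (by
        obtain ⟨c, hc⟩ := hdd
        rw [hc, pow_mul, pow_orderOf_eq_one, one_pow])
    exact ⟨hdvd, full_p_part hpp hn0 hdvd hg0 hnd hpd⟩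
  -- primitive roots of g p lie among the roots ≠ 1
  have hcp_ne : B.charpoly ≠ 0 := (Matrix.charpoly_monic B).ne_zero
  have hsub : ∀ p ∈ n.primeFactors, 2 ≤ g p ∧ primitiveRoots (g p) ℂ ⊆ (B.charpoly.roots.toFinset).erase 1 := by
    intro p hp
    obtain ⟨hsp, hpow⟩ := hlam p hp
    rw [Nat.mem_primeFactors] at hp
    obtain ⟨hpp, hpd, -⟩ := hp
    have hfull := (hgood p (Nat.mem_primeFactors.mpr ⟨hpp, hpd, hn0⟩)).2
    have hfp : n.factorization p ≠ 0 := (Nat.Prime.factorization_pos_of_dvd hpp hn0 hpd).ne'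
    have hgp2 : 2 ≤ g p := by
      have hple : p ∣ g p := dvd_trans (dvd_pow_self p hfp) hfull
      have hg0 : 0 < g p :=
        (isOfFinOrder_iff_pow_eq_one.mpr ⟨n, by omega, hspec_pow _ hsp⟩).orderOf_pos
      have := Nat.le_of_dvd hg0 hple
      have := hpp.two_le
      omega
    have hgpos : 0 < g p := by omega
    -- minpoly over ℚ : cyclotomic divides charpoly
    have hprim : IsPrimitiveRoot (lam p) (g p) := IsPrimitiveRoot.orderOf (lam p)
    have hM2 : Polynomial.map (algebraMap ℚ ℂ) M.charpoly = B.charpoly := by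
      rw [hcpmap, Subsingleton.elim (algebraMap ℚ ℂ) (Rat.castHom ℂ)]
    have haev : aeval (lam p) M.charpoly = 0 := by
      rw [aeval_def, eval₂_eq_eval_map, hM2]
      exact (spec_iff_root B (lam p)).mp hsp
    have hmindvd : minpoly ℚ (lam p) ∣ M.charpoly := minpoly.dvd ℚ _ haev
    have hcyc : cyclotomic (g p) ℚ = minpoly ℚ (lam p) :=
      cyclotomic_eq_minpoly_rat hprim hgpos
    have hcycdvd : cyclotomic (g p) ℂ ∣ B.charpoly := by
      have h5 : Polynomial.map (algebraMap ℚ ℂ) (cyclotomic (g p) ℚ) ∣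
          Polynomial.map (algebraMap ℚ ℂ) M.charpoly := Polynomial.map_dvd _ (hcyc ▸ hmindvd)
      rwa [map_cyclotomic, hM2] at h5
    refine ⟨hgp2, ?_⟩
    intro x hx
    have hxprim : IsPrimitiveRoot x (g p) := (mem_primitiveRoots hgpos).mp hx
    rw [Finset.mem_erase]
    constructor
    · exact hxprim.ne_one (by omega)
    · rw [Multiset.mem_toFinset, mem_roots hcp_ne]
      exact (hxprim.isRoot_cyclotomic hgpos).dvd hcycdvd
  have hEB : (((A : Matrix (Fin d) (Fin d) ℚ).map ((↑) : ℚ → ℂ)).charpoly.roots.toFinset).erase 1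
      = (B.charpoly.roots.toFinset).erase 1 := rfl
  rw [hEB]
  set E := (B.charpoly.roots.toFinset).erase 1 with hE
  have hmem2 : ∀ m ∈ n.primeFactors.image g, 2 ≤ m ∧ primitiveRoots m ℂ ⊆ E := by
    intro m hm
    obtain ⟨p, hp, rfl⟩ := Finset.mem_image.mp hm
    exact hsub p hp
  have hdisj : ∀ m1 ∈ n.primeFactors.image g, ∀ m2 ∈ n.primeFactors.image g, m1 ≠ m2 →
      Disjoint (primitiveRoots m1 ℂ) (primitiveRoots m2 ℂ) := by
    intro m1 h1 m2 h2 hne12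
    rw [Finset.disjoint_left]
    intro x hx1 hx2
    have p1 := (mem_primitiveRoots (by have := (hmem2 m1 h1).1; omega)).mp hx1
    have p2 := (mem_primitiveRoots (by have := (hmem2 m2 h2).1; omega)).mp hx2
    exact hne12 (p1.unique p2)
  calc fAux n ≤ ∑ m ∈ n.primeFactors.image g, m.totient := arith_main n hn g hgood
    _ = ∑ m ∈ n.primeFactors.image g, (primitiveRoots m ℂ).card := by
        apply Finset.sum_congr rfl
        intro m hm
        have hm2 := (hmem2 m hm).1
        have := Complex.isPrimitiveRoot_exp m (by omega)
        exact (this.card_primitiveRoots).symm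
    _ = ((n.primeFactors.image g).biUnion (fun m => primitiveRoots m ℂ)).card :=
        (Finset.card_biUnion hdisj).symm
    _ ≤ E.card := by
        apply Finset.card_le_card
        rw [Finset.biUnion_subset]
        intro m hm
        exact (hmem2 m hm).2
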